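/- Let p = 2, L a number field, 𝔭 a prime of L above 2 unramified over 2, θ ∈ L a 𝔭-adic unit, and r the order of θ modulo 𝔭. Then for every positive even integer k with θ^k ≡ 1 (mod 𝔭), one has ν_2(k) = ν_𝔭(1 − θ^k) − ν_𝔭(1 − θ^{2r}) + 1; and for odd k with θ^k ≡ 1 (mod 𝔭), ν_2(k) = ν_𝔭(1 − θ^k) − ν_𝔭(1 − θ^r). -/

import Mathlib

open NumberField

section Aux

variable {R : Type*} [CommRing R] [IsDomain R] [IsDedekindDomain R] {𝔭 : Ideal R}

private lemma mem_of_dvd_aux {x y : R} (hx : x ∈ 𝔭) (h : x ∣ y) : y ∈ 𝔭 := by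
  obtain ⟨c, rfl⟩ := h
  exact Ideal.mul_mem_right _ _ hx

private lemma nu_mul_aux (hP : Prime 𝔭) (x y : R) :
    emultiplicity 𝔭 (Ideal.span {x * y}) =
      emultiplicity 𝔭 (Ideal.span {x}) + emultiplicity 𝔭 (Ideal.span {y}) := by
  rw [← Ideal.span_singleton_mul_span_singleton, emultiplicity_mul hP]

private lemma nu_eq_zero_aux {x : R} (hx : x ∉ 𝔭) :
    emultiplicity 𝔭 (Ideal.span {x}) = 0 := by
  rw [emultiplicity_eq_zero, Ideal.dvd_iff_le, Ideal.span_singleton_le_iff_mem]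
  exact hx

/-- If `1 - a ∈ 𝔭`, `2 ∈ 𝔭`, and `m` is odd, then `ν(1 - a^m) = ν(1 - a)`. -/
private lemma nu_odd_pow_aux (hP : Prime 𝔭) (hprime : 𝔭.IsPrime) (h2 : (2 : R) ∈ 𝔭)
    {a : R} (ha : 1 - a ∈ 𝔭) {m : ℕ} (hm : Odd m) :
    emultiplicity 𝔭 (Ideal.span {1 - a ^ m}) = emultiplicity 𝔭 (Ideal.span {1 - a}) := by
  have hfac : 1 - a ^ m = (∑ i ∈ Finset.range m, a ^ i) * (1 - a) := by
    linear_combination geom_sum_mul a m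
  have hS : (∑ i ∈ Finset.range m, a ^ i) ∉ 𝔭 := by
    intro hSmem
    -- S - m ∈ 𝔭
    have ha' : a - 1 ∈ 𝔭 := by simpa using 𝔭.neg_mem ha
    have hSm : (∑ i ∈ Finset.range m, a ^ i) - (m : R) ∈ 𝔭 := by
      have : (∑ i ∈ Finset.range m, a ^ i) - (m : R)
          = ∑ i ∈ Finset.range m, (a ^ i - 1) := by
        rw [Finset.sum_sub_distrib]
        simp
      rw [this]
      refine Ideal.sum_mem _ fun i _ => ?_
      exact mem_of_dvd_aux ha' (by simpa using sub_dvd_pow_sub_pow a 1 i)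
    -- m - 1 ∈ 𝔭 since m is odd
    obtain ⟨u, hu⟩ := hm
    have hm1 : (m : R) - 1 ∈ 𝔭 := by
      have : (m : R) - 1 = 2 * (u : R) := by push_cast [hu]; ring
      rw [this]
      exact Ideal.mul_mem_right _ _ h2
    have hone : (1 : R) ∈ 𝔭 := by
      have := 𝔭.sub_mem (𝔭.sub_mem hSmem hSm) hm1
      simpa using this
    exact hprime.ne_top (𝔭.eq_top_iff_one.2 hone)
  rw [hfac, nu_mul_aux hP, nu_eq_zero_aux hS, zero_add]

private lemma mem_sq_aux (h2 : (2 : R) ∈ 𝔭) {a : R} (ha : 1 - a ∈ 𝔭) :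
    1 - a ^ 2 ∈ 𝔭 ^ 2 := by
  have h1a : 1 + a ∈ 𝔭 := by
    have : 1 + a = 2 - (1 - a) := by ring
    rw [this]; exact 𝔭.sub_mem h2 ha
  have : 1 - a ^ 2 = (1 - a) * (1 + a) := by ring
  rw [this, sq]
  exact Ideal.mul_mem_mul ha h1a

/-- If `1 - a ∈ 𝔭²`, `2 ∈ 𝔭`, `2 ∉ 𝔭²`, then `ν(1 - a²) = ν(1 - a) + 1`. -/
private lemma nu_sq_aux (hP : Prime 𝔭) (h2 : (2 : R) ∈ 𝔭) (h2' : (2 : R) ∉ 𝔭 ^ 2)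
    {a : R} (ha : 1 - a ∈ 𝔭 ^ 2) :
    emultiplicity 𝔭 (Ideal.span {1 - a ^ 2}) = emultiplicity 𝔭 (Ideal.span {1 - a}) + 1 := by
  have hpow_le : 𝔭 ^ 2 ≤ 𝔭 := Ideal.pow_le_self (by norm_num)
  have ha1 : 1 - a ∈ 𝔭 := hpow_le ha
  have h1a : 1 + a ∈ 𝔭 := by
    have : 1 + a = 2 - (1 - a) := by ring
    rw [this]; exact 𝔭.sub_mem h2 ha1
  have h1a2 : 1 + a ∉ 𝔭 ^ 2 := by
    intro hmem
    apply h2'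
    have : (2 : R) = (1 + a) + (1 - a) := by ring
    rw [this]
    exact Ideal.add_mem _ hmem ha
  have hnu1a : emultiplicity 𝔭 (Ideal.span {1 + a}) = 1 := by
    rw [show ((1 : ℕ∞) = ((1 : ℕ) : ℕ∞)) by norm_cast, emultiplicity_eq_coe]
    constructor
    · rw [pow_one, Ideal.dvd_iff_le, Ideal.span_singleton_le_iff_mem]
      exact h1a
    · rw [Ideal.dvd_iff_le, Ideal.span_singleton_le_iff_mem]
      exact h1a2
  have hfac : 1 - a ^ 2 = (1 - a) * (1 + a) := by ring
  rw [hfac, nu_mul_aux hP, hnu1a]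

end Aux

/-- Lifting-the-exponent at `p = 2` for the order of `θ` modulo an unramified prime `𝔭`
above `2`: for even `k` with `θ^k ≡ 1 (mod 𝔭)`,
`ν_2(k) = ν_𝔭(1 − θ^k) − ν_𝔭(1 − θ^{2r}) + 1`, and for odd such `k`,
`ν_2(k) = ν_𝔭(1 − θ^k) − ν_𝔭(1 − θ^r)`. -/
theorem lte_at_two (L : Type*) [Field L] [NumberField L]
    (𝔭 : Ideal (𝓞 L)) (hprime : 𝔭.IsPrime) (hbot : 𝔭 ≠ ⊥)
    (habove : ((2 : ℕ) : 𝓞 L) ∈ 𝔭)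
    (hunram : Ideal.ramificationIdx' (Ideal.span {(2 : ℤ)}) 𝔭 = 1)
    (θ : 𝓞 L) (hθ : θ ∉ 𝔭)
    (r : ℕ) (hr : 0 < r) (hθr : θ ^ r - 1 ∈ 𝔭)
    (hrmin : ∀ s : ℕ, 0 < s → s < r → θ ^ s - 1 ∉ 𝔭)
    (k : ℕ) (hk : 0 < k) (hθk : θ ^ k - 1 ∈ 𝔭) :
    (Even k →
      emultiplicity 𝔭 (Ideal.span {1 - θ ^ k}) + 1 =
        (padicValNat 2 k : ℕ∞) + emultiplicity 𝔭 (Ideal.span {1 - θ ^ (2 * r)})) ∧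
    (Odd k →
      emultiplicity 𝔭 (Ideal.span {1 - θ ^ k}) =
        (padicValNat 2 k : ℕ∞) + emultiplicity 𝔭 (Ideal.span {1 - θ ^ r})) := by
  have hP : Prime 𝔭 := Ideal.prime_of_isPrime hbot hprime
  have h2 : (2 : 𝓞 L) ∈ 𝔭 := by exact_mod_cast habove
  -- 2 is not in 𝔭² because 𝔭 is unramified above 2
  have h2' : (2 : 𝓞 L) ∉ 𝔭 ^ 2 := by
    intro hmem
    have h2ne : Ideal.span {(2 : 𝓞 L)} ≠ ⊥ := by
      rw [Ne, Ideal.span_singleton_eq_bot]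
      exact two_ne_zero
    have hfin : FiniteMultiplicity 𝔭 (Ideal.span {(2 : 𝓞 L)}) :=
      FiniteMultiplicity.of_not_isUnit
        (by rw [Ideal.isUnit_iff]; exact hprime.ne_top) h2ne
    set m := multiplicity 𝔭 (Ideal.span {(2 : 𝓞 L)}) with hm
    have hspan2 : Ideal.map (algebraMap ℤ (𝓞 L)) (Ideal.span {(2 : ℤ)})
        = Ideal.span {(2 : 𝓞 L)} := by
      rw [Ideal.map_span]
      norm_num
    have hle : Ideal.map (algebraMap ℤ (𝓞 L)) (Ideal.span {(2 : ℤ)}) ≤ 𝔭 ^ m := by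
      rw [hspan2]
      exact Ideal.le_of_dvd (pow_multiplicity_dvd 𝔭 _)
    have hgt : ¬ Ideal.map (algebraMap ℤ (𝓞 L)) (Ideal.span {(2 : ℤ)}) ≤ 𝔭 ^ (m + 1) := by
      rw [hspan2]
      intro hle'
      exact hfin.not_pow_dvd_of_multiplicity_lt (lt_add_one m) (Ideal.dvd_iff_le.2 hle')
    have hidx := Ideal.ramificationIdx'_spec hle hgt
    rw [hunram] at hidx
    have h2le : 2 ≤ m := by
      apply hfin.le_multiplicity_of_pow_dvd
      rw [Ideal.dvd_iff_le, Ideal.span_singleton_le_iff_mem]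
      exact hmem
    omega
  -- θ^n ≡ 1 mod 𝔭 whenever r ∣ n
  have hmem_pow : ∀ n : ℕ, r ∣ n → θ ^ n - 1 ∈ 𝔭 := by
    rintro n ⟨c, rfl⟩
    have hdvd : θ ^ r - 1 ∣ θ ^ (r * c) - 1 := by
      rw [pow_mul]
      simpa using sub_dvd_pow_sub_pow (θ ^ r) 1 c
    exact mem_of_dvd_aux hθr hdvd
  -- r is odd
  have hodd_r : Odd r := by
    rcases Nat.even_or_odd r with he | ho
    · exfalso
      obtain ⟨u, hu⟩ := he
      have hu0 : 0 < u := by omega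
      have hulr : u < r := by omega
      apply hrmin u hu0 hulr
      have hrw : θ ^ r = (θ ^ u) ^ 2 := by rw [hu, ← pow_mul]; ring_nf
      have hsq : (θ ^ u - 1) ^ 2 ∈ 𝔭 := by
        have hid : (θ ^ u - 1) ^ 2 = (θ ^ r - 1) - 2 * (θ ^ u - 1) := by
          rw [hrw]; ring
        rw [hid]
        exact 𝔭.sub_mem hθr (Ideal.mul_mem_right _ _ h2)
      exact hprime.mem_of_pow_mem _ hsq
    · exact ho
  -- r divides k
  have hrdvd : r ∣ k := by
    by_contra hnd
    have h1 : 0 < k % r := Nat.pos_of_ne_zero fun h => hnd (Nat.dvd_of_mod_eq_zero h)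
    have h2lt : k % r < r := Nat.mod_lt _ hr
    apply hrmin _ h1 h2lt
    have hpowk : θ ^ k = θ ^ (r * (k / r)) * θ ^ (k % r) := by
      rw [← pow_add, Nat.div_add_mod]
    have key : θ ^ (k % r) - 1
        = (θ ^ k - 1) - θ ^ (k % r) * (θ ^ (r * (k / r)) - 1) := by
      rw [hpowk]; ring
    rw [key]
    exact 𝔭.sub_mem hθk (Ideal.mul_mem_left _ _ (hmem_pow _ ⟨k / r, rfl⟩))
  constructor
  · -- Even case
    intro hke
    set s := padicValNat 2 k with hs
    have hk0 : k ≠ 0 := hk.ne'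
    have hs1 : 1 ≤ s := by
      rw [hs, ← Nat.factorization_def k Nat.prime_two]
      exact Nat.Prime.factorization_pos_of_dvd Nat.prime_two hk0 hke.two_dvd
    set t := k / 2 ^ s with ht
    have hkt : 2 ^ s * t = k := by
      rw [ht, hs, ← Nat.factorization_def k Nat.prime_two]
      exact Nat.ordProj_mul_ordCompl_eq_self k 2
    have hoddt : Odd t := by
      rw [Nat.odd_iff, ← Nat.two_dvd_ne_zero]
      rw [ht, hs, ← Nat.factorization_def k Nat.prime_two]
      exact Nat.not_dvd_ordCompl Nat.prime_two hk0
    have hrt : r ∣ t := by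
      have hcop : Nat.Coprime r (2 ^ s) := by
        apply Nat.Coprime.pow_right
        exact ((Nat.Prime.coprime_iff_not_dvd Nat.prime_two).2
          (by rw [Nat.two_dvd_ne_zero, ← Nat.odd_iff]; exact hodd_r)).symm
      have hdvdt : r ∣ 2 ^ s * t := by rw [hkt]; exact hrdvd
      exact hcop.dvd_of_dvd_mul_left hdvdt
    have hoddtr : Odd (t / r) := by
      obtain ⟨c, hc⟩ := hrt
      rw [hc] at hoddt ⊢
      rw [Nat.mul_div_cancel_left _ hr]
      exact (Nat.odd_mul.1 hoddt).2
    -- 1 - θ^t ∈ 𝔭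
    have hbt : 1 - θ ^ t ∈ 𝔭 := by simpa using 𝔭.neg_mem (hmem_pow t hrt)
    have hb2r : 1 - θ ^ (2 * r) ∈ 𝔭 := by
      simpa using 𝔭.neg_mem (hmem_pow (2 * r) ⟨2, by ring⟩)
    -- ν(1 - θ^{2t}) = ν(1 - θ^{2r})
    have h2t2r : emultiplicity 𝔭 (Ideal.span {1 - θ ^ (2 * t)})
        = emultiplicity 𝔭 (Ideal.span {1 - θ ^ (2 * r)}) := by
      obtain ⟨c, hc⟩ := hrt
      have hcodd : Odd c := by
        rw [hc] at hoddt; exact (Nat.odd_mul.1 hoddt).2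
      have : θ ^ (2 * t) = (θ ^ (2 * r)) ^ c := by
        rw [← pow_mul, hc]; ring_nf
      rw [this]
      exact nu_odd_pow_aux hP hprime h2 hb2r hcodd
    -- induction: ν(1 - (θ^t)^(2^(j+1))) = ν(1 - (θ^t)^2) + j, with membership in 𝔭²
    have hmain : ∀ j : ℕ,
        emultiplicity 𝔭 (Ideal.span {1 - (θ ^ t) ^ 2 ^ (j + 1)})
          = emultiplicity 𝔭 (Ideal.span {1 - (θ ^ t) ^ 2}) + (j : ℕ∞)
        ∧ 1 - (θ ^ t) ^ 2 ^ (j + 1) ∈ 𝔭 ^ 2 := by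
      intro j
      induction j with
      | zero =>
        constructor
        · norm_num
        · simpa using mem_sq_aux h2 hbt
      | succ n ih =>
        obtain ⟨ihν, ihmem⟩ := ih
        have hrw : (θ ^ t) ^ 2 ^ (n + 2) = ((θ ^ t) ^ 2 ^ (n + 1)) ^ 2 := by
          rw [show (2:ℕ) ^ (n + 2) = 2 ^ (n + 1) * 2 from pow_succ 2 (n + 1), pow_mul]
        have hmemP : 1 - (θ ^ t) ^ 2 ^ (n + 1) ∈ 𝔭 :=
          Ideal.pow_le_self (two_ne_zero) ihmem
        constructor
        · rw [hrw, nu_sq_aux hP h2 h2' ihmem, ihν]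
          push_cast
          ring
        · rw [hrw]
          exact mem_sq_aux h2 hmemP
      -- end induction
    have hθk_rw : θ ^ k = (θ ^ t) ^ 2 ^ ((s - 1) + 1) := by
      rw [← pow_mul, Nat.sub_add_cancel hs1, Nat.mul_comm, hkt]
    have hθ2t : (θ ^ t) ^ 2 = θ ^ (2 * t) := by rw [← pow_mul, mul_comm]
    obtain ⟨hν, _⟩ := hmain (s - 1)
    rw [hθk_rw, hν, hθ2t, h2t2r]
    have hcast : ((s - 1 : ℕ) : ℕ∞) + 1 = (s : ℕ∞) := by
      rw [show ((1 : ℕ∞) = ((1 : ℕ) : ℕ∞)) by norm_cast, ← Nat.cast_add]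
      congr 1
      omega
    rw [add_assoc, hcast, add_comm]
  · -- Odd case
    intro hko
    have hval : padicValNat 2 k = 0 := by
      apply padicValNat.eq_zero_of_not_dvd
      rw [Nat.two_dvd_ne_zero, ← Nat.odd_iff]
      exact hko
    rw [hval]
    obtain ⟨c, hc⟩ := hrdvd
    have hcodd : Odd c := by
      rw [hc] at hko; exact (Nat.odd_mul.1 hko).2
    have hbr : 1 - θ ^ r ∈ 𝔭 := by simpa using 𝔭.neg_mem hθr
    have : θ ^ k = (θ ^ r) ^ c := by rw [← pow_mul, hc]
    rw [this, nu_odd_pow_aux hP hprime h2 hbr hcodd]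
    norm_num
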